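/- For each integer k ≥ 1 and real A > 1, the derivative of q_k(A) = ∫₀¹ (1−u)^k/√(A²−u) du satisfies q_k'(A) = 2 − 2k·A·q_{k−1}(A). -/

import Mathlib

open MeasureTheory intervalIntegral Set
open scoped Interval

/-- Derivative identity for `q_k(A) = ∫₀¹ (1-u)^k / √(A²-u) du`:
`q_k'(A) = 2 - 2kA q_{k-1}(A)` for `k ≥ 1`, `A > 1`. -/
theorem qk_deriv (k : ℕ) (hk : 1 ≤ k) (A : ℝ) (hA : 1 < A) :
    deriv (fun B : ℝ => ∫ u in (0:ℝ)..1, (1 - u) ^ k / Real.sqrt (B ^ 2 - u)) A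
      = 2 - 2 * k * A * ∫ u in (0:ℝ)..1, (1 - u) ^ (k - 1) / Real.sqrt (A ^ 2 - u) := by
  have hA0 : 0 < A := lt_trans one_pos hA
  set ε : ℝ := (A - 1) / 2 with hεdef
  have hε : 0 < ε := by unfold ε; linarith
  set c : ℝ := (A + 1) / 2 with hcdef
  have hc1 : 1 < c := by unfold c; linarith
  have hcA : c < A := by unfold c; linarith
  have hAc : A - ε = c := by unfold c ε; ring
  have hc2 : 0 < c ^ 2 - 1 := by nlinarith
  -- positivity of the denominator
  have hden : ∀ x u : ℝ, c < x → u ≤ 1 → c ^ 2 - 1 ≤ x ^ 2 - u := by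
    intro x u hx hu; nlinarith
  have hxball : ∀ x ∈ Metric.ball A ε, c < x ∧ x < A + ε := by
    intro x hx
    rw [Metric.mem_ball, Real.dist_eq, abs_sub_lt_iff] at hx
    constructor <;> linarith [hx.1, hx.2]
  -- the partial derivative in B
  set F' : ℝ → ℝ → ℝ := fun x u =>
    (1 - u) ^ k * (-(1 / (2 * Real.sqrt (x ^ 2 - u)) * (2 * x)) / Real.sqrt (x ^ 2 - u) ^ 2)
    with hF'def
  have hderivF : ∀ x u : ℝ, 0 < x ^ 2 - u →
      HasDerivAt (fun B : ℝ => (1 - u) ^ k / Real.sqrt (B ^ 2 - u)) (F' x u) x := by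
    intro x u hpos
    have h1 : HasDerivAt (fun B : ℝ => B ^ 2 - u) (2 * x) x := by
      simpa using (hasDerivAt_pow 2 x).sub_const u
    have hs : HasDerivAt (fun B : ℝ => Real.sqrt (B ^ 2 - u))
        (1 / (2 * Real.sqrt (x ^ 2 - u)) * (2 * x)) x :=
      (Real.hasDerivAt_sqrt (ne_of_gt hpos)).comp x h1
    have hne : Real.sqrt (x ^ 2 - u) ≠ 0 := Real.sqrt_ne_zero'.mpr hpos
    have hinv := (hs.inv hne).const_mul ((1 - u) ^ k)
    simpa [div_eq_mul_inv, hF'def] using hinv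
  -- dominated derivative lemma
  have key : HasDerivAt (fun B : ℝ => ∫ u in (0:ℝ)..1, (1 - u) ^ k / Real.sqrt (B ^ 2 - u))
      (∫ u in (0:ℝ)..1, F' A u) A := by
    have hmeas : ∀ x : ℝ, AEStronglyMeasurable
        (fun u : ℝ => (1 - u) ^ k / Real.sqrt (x ^ 2 - u))
        (volume.restrict (Ι (0:ℝ) 1)) := by
      intro x
      exact (((continuous_const.sub continuous_id).pow k).measurable.div
        ((Real.continuous_sqrt.comp (continuous_const.sub continuous_id)).measurable)).aestronglyMeasurable
    have hsA : ∀ u ∈ uIcc (0:ℝ) 1, Real.sqrt (A ^ 2 - u) ≠ 0 := by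
      intro u hu
      rw [uIcc_of_le (by norm_num)] at hu
      have := hden A u hcA hu.2
      exact ne_of_gt (Real.sqrt_pos.mpr (by linarith))
    have hFint : IntervalIntegrable (fun u : ℝ => (1 - u) ^ k / Real.sqrt (A ^ 2 - u))
        volume 0 1 := by
      apply ContinuousOn.intervalIntegrable
      exact ((continuous_const.sub continuous_id).pow k).continuousOn.div
        ((Real.continuous_sqrt.comp (continuous_const.sub continuous_id)).continuousOn) hsA
    have hF'meas : AEStronglyMeasurable (F' A) (volume.restrict (Ι (0:ℝ) 1)) := by
      apply Measurable.aestronglyMeasurable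
      apply Measurable.mul
      · exact ((continuous_const.sub continuous_id).pow k).measurable
      · apply Measurable.div
        · exact (((measurable_const.div ((Real.continuous_sqrt.comp
            (continuous_const.sub continuous_id)).measurable.const_mul 2)).mul
            measurable_const)).neg
        · exact ((Real.continuous_sqrt.comp
            (continuous_const.sub continuous_id)).measurable.pow measurable_const)
    set C : ℝ := (A + ε) / ((c ^ 2 - 1) * Real.sqrt (c ^ 2 - 1)) with hCdef
    have hbound : ∀ᵐ u ∂(volume : Measure ℝ), u ∈ Ι (0:ℝ) 1 →
        ∀ x ∈ Metric.ball A ε, ‖F' x u‖ ≤ C := by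
      filter_upwards with u hu x hx
      rw [uIoc_of_le (by norm_num : (0:ℝ) ≤ 1)] at hu
      obtain ⟨hxc, hxA⟩ := hxball x hx
      have hx0 : 0 < x := lt_trans (lt_trans one_pos hc1) hxc
      have hpos : 0 < x ^ 2 - u := lt_of_lt_of_le hc2 (hden x u hxc hu.2)
      have hs0 : 0 < Real.sqrt (x ^ 2 - u) := Real.sqrt_pos.mpr hpos
      have hsq : Real.sqrt (x ^ 2 - u) ^ 2 = x ^ 2 - u := Real.sq_sqrt hpos.le
      have hval : F' x u = -((1 - u) ^ k * x / ((x ^ 2 - u) * Real.sqrt (x ^ 2 - u))) := by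
        rw [hF'def]; rw [← hsq]; field_simp; ring_nf; rw [Real.sqrt_sq (Real.sqrt_nonneg _)]
      have h1u : 0 ≤ 1 - u := by linarith [hu.2]
      have h1u1 : (1 - u) ^ k ≤ 1 := pow_le_one₀ h1u (by linarith [hu.1])
      have hnum : (1 - u) ^ k * x ≤ A + ε := by
        calc (1 - u) ^ k * x ≤ 1 * x := by
              exact mul_le_mul_of_nonneg_right h1u1 hx0.le
          _ = x := one_mul x
          _ ≤ A + ε := hxA.le
      have hdenlb : (c ^ 2 - 1) * Real.sqrt (c ^ 2 - 1)
          ≤ (x ^ 2 - u) * Real.sqrt (x ^ 2 - u) := by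
        have h := hden x u hxc hu.2
        exact mul_le_mul h (Real.sqrt_le_sqrt h) (Real.sqrt_nonneg _) hpos.le
      have habs : ‖F' x u‖ = (1 - u) ^ k * x / ((x ^ 2 - u) * Real.sqrt (x ^ 2 - u)) := by
        rw [hval, norm_neg, Real.norm_eq_abs, abs_of_nonneg]
        positivity
      rw [habs, hCdef]
      exact div_le_div₀ (by positivity) hnum (by positivity) hdenlb
    have hdiff : ∀ᵐ u ∂(volume : Measure ℝ), u ∈ Ι (0:ℝ) 1 →
        ∀ x ∈ Metric.ball A ε, HasDerivAt
          (fun B : ℝ => (1 - u) ^ k / Real.sqrt (B ^ 2 - u)) (F' x u) x := by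
      filter_upwards with u hu x hx
      rw [uIoc_of_le (by norm_num : (0:ℝ) ≤ 1)] at hu
      obtain ⟨hxc, _⟩ := hxball x hx
      exact hderivF x u (lt_of_lt_of_le hc2 (hden x u hxc hu.2))
    exact (intervalIntegral.hasDerivAt_integral_of_dominated_loc_of_deriv_le (Metric.ball_mem_nhds A hε)
      (Filter.Eventually.of_forall fun x => hmeas x) hFint hF'meas hbound
      intervalIntegrable_const hdiff).2
  rw [key.deriv]
  -- now evaluate the integral of F' A by parts
  have hsApos : ∀ u ∈ uIcc (0:ℝ) 1, 0 < A ^ 2 - u := by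
    intro u hu
    rw [uIcc_of_le (by norm_num)] at hu
    exact lt_of_lt_of_le (by nlinarith : (0:ℝ) < A ^ 2 - 1) (by linarith [hu.2])
  have hsAne : ∀ u ∈ uIcc (0:ℝ) 1, Real.sqrt (A ^ 2 - u) ≠ 0 := fun u hu =>
    ne_of_gt (Real.sqrt_pos.mpr (hsApos u hu))
  set f : ℝ → ℝ := fun u => (1 - u) ^ k with hfdef
  set f' : ℝ → ℝ := fun u => (k : ℝ) * (1 - u) ^ (k - 1) * (-1) with hf'def
  set g : ℝ → ℝ := fun u => (Real.sqrt (A ^ 2 - u))⁻¹ with hgdef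
  set g' : ℝ → ℝ := fun u =>
    -(1 / (2 * Real.sqrt (A ^ 2 - u)) * (-1)) / Real.sqrt (A ^ 2 - u) ^ 2 with hg'def
  have hsc : ContinuousOn (fun u : ℝ => Real.sqrt (A ^ 2 - u)) (uIcc (0:ℝ) 1) :=
    (Real.continuous_sqrt.comp (continuous_const.sub continuous_id)).continuousOn
  have hfc : ContinuousOn f (uIcc (0:ℝ) 1) :=
    ((continuous_const.sub continuous_id).pow k).continuousOn
  have hgc : ContinuousOn g (uIcc (0:ℝ) 1) := hsc.inv₀ hsAne
  have hf'c : ContinuousOn f' (uIcc (0:ℝ) 1) :=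
    ((continuous_const.mul ((continuous_const.sub continuous_id).pow (k-1))).mul continuous_const).continuousOn
  have hg'c : ContinuousOn g' (uIcc (0:ℝ) 1) := by
    apply ContinuousOn.div
    · exact ((continuousOn_const.div (continuousOn_const.mul hsc)
        (fun u hu => mul_ne_zero two_ne_zero (hsAne u hu))).mul continuousOn_const).neg
    · exact hsc.pow 2
    · intro u hu
      exact pow_ne_zero 2 (hsAne u hu)
  have hfd : ∀ u ∈ Ioo (min (0:ℝ) 1) (max 0 1), HasDerivAt f (f' u) u := by
    intro u _
    simpa [hf'def] using ((hasDerivAt_id u).const_sub 1).fun_pow k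
  have hgd : ∀ u ∈ Ioo (min (0:ℝ) 1) (max 0 1), HasDerivAt g (g' u) u := by
    intro u hu
    rw [min_eq_left (by norm_num : (0:ℝ) ≤ 1), max_eq_right (by norm_num : (0:ℝ) ≤ 1)] at hu
    have hpos : 0 < A ^ 2 - u := hsApos u (by
      rw [uIcc_of_le (by norm_num)]; exact ⟨hu.1.le, hu.2.le⟩)
    have h1 : HasDerivAt (fun u : ℝ => A ^ 2 - u) (-1) u := by
      simpa using (hasDerivAt_id u).const_sub (A ^ 2)
    have hs : HasDerivAt (fun u : ℝ => Real.sqrt (A ^ 2 - u))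
        (1 / (2 * Real.sqrt (A ^ 2 - u)) * (-1)) u :=
      (Real.hasDerivAt_sqrt (ne_of_gt hpos)).comp u h1
    exact hs.inv (Real.sqrt_ne_zero'.mpr hpos)
  have hibp := intervalIntegral.integral_mul_deriv_eq_deriv_mul_of_hasDerivAt
    hfc hgc hfd hgd (hf'c.intervalIntegrable) (hg'c.intervalIntegrable)
  -- rewrite ∫ F' A as -2A * ∫ f * g'
  have hFeq : ∀ u ∈ uIcc (0:ℝ) 1, F' A u = (-(2*A)) * (f u * g' u) := by
    intro u hu
    have hpos := hsApos u hu
    have hs0 : Real.sqrt (A ^ 2 - u) ≠ 0 := hsAne u hu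
    rw [hF'def, hfdef, hg'def]
    field_simp
  have hint1 : (∫ u in (0:ℝ)..1, F' A u) = -(2*A) * ∫ u in (0:ℝ)..1, f u * g' u := by
    rw [← intervalIntegral.integral_const_mul]
    apply intervalIntegral.integral_congr
    exact hFeq
  rw [hint1, hibp]
  -- evaluate boundary terms and the remaining integral
  have hf1 : f 1 = 0 := by simp [hfdef, zero_pow (by omega : k ≠ 0)]
  have hf0 : f 0 = 1 := by simp [hfdef]
  have hg0 : g 0 = A⁻¹ := by
    rw [hgdef]; simp [Real.sqrt_sq hA0.le]
  have hint2 : (∫ u in (0:ℝ)..1, f' u * g u)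
      = -(k : ℝ) * ∫ u in (0:ℝ)..1, (1 - u) ^ (k - 1) / Real.sqrt (A ^ 2 - u) := by
    rw [← intervalIntegral.integral_const_mul]
    apply intervalIntegral.integral_congr
    intro u hu
    rw [hf'def, hgdef]
    simp only [div_eq_mul_inv]
    ring
  rw [hf1, hf0, hg0, hint2]
  have hAne : A ≠ 0 := ne_of_gt hA0
  field_simp
  ring
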